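/- arXiv:2507.08904 — 2 statements merged into one kernel-verified Lean document; each statement's English description precedes it below -/
import Mathlib

section
/- Let Y₁ be noncentral chi-squared with 2 degrees of freedom and noncentrality λ₁ > 0, and let Y₂,...,Y_L be i.i.d. central chi-squared with 2 degrees of freedom, all independent. Then P(Y₁ > max{Y₂,...,Y_L}) is strictly increasing in λ₁. -/
open MeasureTheory Real

/-- Modified Bessel function of the first kind of order 0 (real argument). -/
noncomputable def besselI0 (x : ℝ) : ℝ :=
  ∑' k : ℕ, (x / 2) ^ (2 * k) / ((Nat.factorial k : ℝ)) ^ 2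

/-- Density of the noncentral chi-squared distribution with 2 degrees of freedom
and noncentrality `lam`, for `y ≥ 0`. -/
noncomputable def ncChiSq2Pdf (lam y : ℝ) : ℝ :=
  (1 / 2) * Real.exp (-(y + lam) / 2) * besselI0 (Real.sqrt (y * lam))

/-- `P(Y₁ > max{Y₂,…,Y_L})` where `Y₁ ~ χ²₂(lam)` and `Y₂,…,Y_L` are i.i.d. central
χ²₂ (rate-1/2 exponentials), all independent; by conditioning on `Y₁` this equals
`∫₀^∞ (1 - e^{-y/2})^{L-1} f_{χ²₂(lam)}(y) dy`. -/
noncomputable def probBeatMax (L : ℕ) (lam : ℝ) : ℝ :=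
  ∫ y in Set.Ioi (0 : ℝ), (1 - Real.exp (-y / 2)) ^ (L - 1) * ncChiSq2Pdf lam y

open Set
open scoped ENNReal

noncomputable def NCg (L : ℕ) (y : ℝ) : ℝ := (1 - Real.exp (-y / 2)) ^ (L - 1)

lemma NCg_nonneg (L : ℕ) {y : ℝ} (hy : 0 ≤ y) : 0 ≤ NCg L y := by
  apply pow_nonneg
  have : Real.exp (-y / 2) ≤ 1 := Real.exp_le_one_iff.mpr (by linarith)
  linarith

lemma NCg_le_one (L : ℕ) {y : ℝ} (hy : 0 ≤ y) : NCg L y ≤ 1 := by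
  apply pow_le_one₀
  · have : Real.exp (-y / 2) ≤ 1 := Real.exp_le_one_iff.mpr (by linarith)
    linarith
  · have : 0 < Real.exp (-y / 2) := Real.exp_pos _
    linarith

lemma NCg_pos (L : ℕ) {y : ℝ} (hy : 0 < y) : 0 < NCg L y := by
  apply pow_pos
  have : Real.exp (-y / 2) < 1 := Real.exp_lt_one_iff.mpr (by linarith)
  linarith

lemma NCg_strictMonoOn (L : ℕ) (hL : 2 ≤ L) : StrictMonoOn (NCg L) (Ici 0) := by
  intro x hx y hy hxy
  have hb : 1 - Real.exp (-x / 2) < 1 - Real.exp (-y / 2) := by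
    have : Real.exp (-y / 2) < Real.exp (-x / 2) := Real.exp_lt_exp.mpr (by linarith)
    linarith
  have hbx : 0 ≤ 1 - Real.exp (-x / 2) := by
    have : Real.exp (-x / 2) ≤ 1 := Real.exp_le_one_iff.mpr (by simp at hx; linarith)
    linarith
  exact pow_lt_pow_left₀ hb hbx (by omega)

lemma NCg_continuous (L : ℕ) : Continuous (NCg L) := by
  unfold NCg; fun_prop

lemma integrableOn_pow_exp (k : ℕ) :
    IntegrableOn (fun y : ℝ => y ^ k * Real.exp (-y / 2)) (Ioi 0) := by
  have h := integrableOn_rpow_mul_exp_neg_mul_rpow (p := 1) (s := (k : ℝ)) (b := 1/2)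
    (by exact_mod_cast neg_one_lt_zero.trans_le (Nat.cast_nonneg k) : (-1:ℝ) < (k:ℝ)) one_pos (by norm_num)
  refine h.congr_fun (fun x hx => ?_) measurableSet_Ioi
  dsimp only
  rw [Real.rpow_natCast, Real.rpow_one]
  ring_nf

lemma integral_pow_exp (k : ℕ) :
    ∫ y in Ioi (0:ℝ), y ^ k * Real.exp (-y / 2) = 2 ^ (k + 1) * (Nat.factorial k) := by
  have h := integral_rpow_mul_exp_neg_mul_Ioi (a := (k : ℝ) + 1) (r := 1/2)
    (by positivity) (by norm_num)
  have h1 : ∫ t in Ioi (0:ℝ), t ^ ((k : ℝ) + 1 - 1) * Real.exp (-(1/2 * t))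
      = ∫ y in Ioi (0:ℝ), y ^ k * Real.exp (-y / 2) := by
    refine setIntegral_congr_fun measurableSet_Ioi (fun t ht => ?_)
    rw [add_sub_cancel_right, Real.rpow_natCast]
    ring_nf
  rw [h1] at h
  rw [h, Real.Gamma_nat_eq_factorial k, show ((1:ℝ)/(1/2)) = 2 by norm_num,
    show ((k:ℝ) + 1) = ((k+1 : ℕ) : ℝ) by push_cast; ring, Real.rpow_natCast]

open scoped ENNReal

noncomputable def ncI (L k : ℕ) : ℝ :=
  ∫ y in Ioi (0:ℝ), NCg L y * (y ^ k * Real.exp (-y / 2))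

lemma integrableOn_NCg_pow_exp (L k : ℕ) :
    IntegrableOn (fun y : ℝ => NCg L y * (y ^ k * Real.exp (-y / 2))) (Ioi 0) := by
  refine Integrable.mono' (integrableOn_pow_exp k)
    (((NCg_continuous L).mul (by fun_prop)).aestronglyMeasurable) ?_
  refine (ae_restrict_iff' measurableSet_Ioi).2 (Filter.Eventually.of_forall fun y hy => ?_)
  have hy : (0:ℝ) < y := hy
  have h1 : 0 ≤ NCg L y := NCg_nonneg L hy.le
  have h2 : NCg L y ≤ 1 := NCg_le_one L hy.le
  have h3 : 0 ≤ y ^ k * Real.exp (-y / 2) := by positivity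
  rw [Real.norm_eq_abs, abs_of_nonneg (by positivity)]
  nlinarith

lemma ncI_pos (L k : ℕ) : 0 < ncI L k := by
  rw [ncI]
  refine (setIntegral_pos_iff_support_of_nonneg_ae ?_ (integrableOn_NCg_pow_exp L k)).2 ?_
  · refine (ae_restrict_iff' measurableSet_Ioi).2 (Filter.Eventually.of_forall fun y hy => ?_)
    have hy : (0:ℝ) < y := hy
    have := NCg_nonneg L hy.le
    simp only [Pi.zero_apply]
    positivity
  · have hsub : Ioi (0:ℝ) ⊆
        Function.support (fun y => NCg L y * (y ^ k * Real.exp (-y / 2))) ∩ Ioi 0 := by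
      intro y hy
      have hy : (0:ℝ) < y := hy
      refine ⟨?_, hy⟩
      have := NCg_pos L hy
      have : 0 < NCg L y * (y ^ k * Real.exp (-y / 2)) := by positivity
      exact ne_of_gt this
    calc (0:ℝ≥0∞) < volume (Ioi (0:ℝ)) := by simp
    _ ≤ _ := measure_mono hsub

lemma ncI_le (L k : ℕ) : ncI L k ≤ 2 ^ (k + 1) * (Nat.factorial k) := by
  rw [ncI, ← integral_pow_exp k]
  refine setIntegral_mono_on (integrableOn_NCg_pow_exp L k) (integrableOn_pow_exp k)
    measurableSet_Ioi (fun y hy => ?_)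
  have hy : (0:ℝ) < y := hy
  have h2 : NCg L y ≤ 1 := NCg_le_one L hy.le
  have h3 : 0 ≤ y ^ k * Real.exp (-y / 2) := by positivity
  nlinarith

lemma ncI_succ (L : ℕ) (hL : 2 ≤ L) (k : ℕ) :
    2 * ((k : ℝ) + 1) * ncI L k < ncI L (k + 1) := by
  set c : ℝ := 2 * ((k : ℝ) + 1) with hc
  have hc0 : 0 < c := by positivity
  set h : ℝ → ℝ := fun y => (NCg L y - NCg L c) * (y - c) * (y ^ k * Real.exp (-y / 2)) with hh
  have hdecomp : ∀ y : ℝ, h y =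
      NCg L y * (y ^ (k+1) * Real.exp (-y / 2)) - c * (NCg L y * (y ^ k * Real.exp (-y / 2)))
      - NCg L c * (y ^ (k+1) * Real.exp (-y / 2)) + (NCg L c * c) * (y ^ k * Real.exp (-y / 2)) := by
    intro y; simp only [hh, pow_succ]; ring
  have hA1 := integrableOn_NCg_pow_exp L (k+1)
  have hA0 := integrableOn_NCg_pow_exp L k
  have hB1 := integrableOn_pow_exp (k+1)
  have hB0 := integrableOn_pow_exp k
  have j1 : IntegrableOn (fun y : ℝ => NCg L y * (y ^ (k+1) * Real.exp (-y / 2))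
      - c * (NCg L y * (y ^ k * Real.exp (-y / 2)))) (Ioi 0) := hA1.sub (hA0.const_mul c)
  have j2 : IntegrableOn (fun y : ℝ => NCg L y * (y ^ (k+1) * Real.exp (-y / 2))
      - c * (NCg L y * (y ^ k * Real.exp (-y / 2)))
      - NCg L c * (y ^ (k+1) * Real.exp (-y / 2))) (Ioi 0) := j1.sub (hB1.const_mul _)
  have hint : IntegrableOn h (Ioi 0) := by
    refine IntegrableOn.congr_fun (j2.add (hB0.const_mul (NCg L c * c)))
      (fun y _ => (hdecomp y).symm) measurableSet_Ioi
  have hval : ∫ y in Ioi (0:ℝ), h y = ncI L (k+1) - c * ncI L k := by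
    have e1 : ∫ y in Ioi (0:ℝ), h y = ∫ y in Ioi (0:ℝ),
        (NCg L y * (y ^ (k+1) * Real.exp (-y / 2)) - c * (NCg L y * (y ^ k * Real.exp (-y / 2)))
        - NCg L c * (y ^ (k+1) * Real.exp (-y / 2)) + (NCg L c * c) * (y ^ k * Real.exp (-y / 2))) :=
      setIntegral_congr_fun measurableSet_Ioi (fun y _ => hdecomp y)
    rw [e1, integral_add j2 (hB0.const_mul _), integral_sub j1 (hB1.const_mul _),
      integral_sub hA1 (hA0.const_mul c), integral_const_mul, integral_const_mul,
      integral_const_mul, ← ncI, ← ncI, integral_pow_exp, integral_pow_exp]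
    have e2 : (2:ℝ) ^ (k + 1 + 1) * (Nat.factorial (k+1)) = c * (2 ^ (k + 1) * (Nat.factorial k)) := by
      rw [Nat.factorial_succ, hc]; push_cast; ring
    rw [e2]; ring
  have hnn : 0 ≤ᵐ[volume.restrict (Ioi (0:ℝ))] h := by
    refine (ae_restrict_iff' measurableSet_Ioi).2 (Filter.Eventually.of_forall fun y hy => ?_)
    have hy : (0:ℝ) < y := hy
    simp only [Pi.zero_apply, hh]
    have h2 : 0 ≤ y ^ k * Real.exp (-y / 2) := by positivity
    rcases le_total y c with hyc | hyc
    · have : NCg L y ≤ NCg L c := by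
        rcases eq_or_lt_of_le hyc with rfl | hlt
        · exact le_rfl
        · exact (NCg_strictMonoOn L hL hy.le hc0.le hlt).le
      nlinarith [mul_nonneg (mul_nonneg (neg_nonneg.mpr (show NCg L y - NCg L c ≤ 0 by linarith))
        (neg_nonneg.mpr (show y - c ≤ 0 by linarith))) h2]
    · have : NCg L c ≤ NCg L y := by
        rcases eq_or_lt_of_le hyc with rfl | hlt
        · exact le_rfl
        · exact (NCg_strictMonoOn L hL hc0.le hy.le hlt).le
      have := mul_nonneg (mul_nonneg (by linarith : (0:ℝ) ≤ NCg L y - NCg L c)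
        (by linarith : (0:ℝ) ≤ y - c)) h2
      linarith
  have hpos : 0 < ∫ y in Ioi (0:ℝ), h y := by
    rw [setIntegral_pos_iff_support_of_nonneg_ae hnn hint]
    have hsub : Ioi c ⊆ Function.support h ∩ Ioi 0 := by
      intro y hy
      have hy : c < y := hy
      have hy0 : (0:ℝ) < y := hc0.trans hy
      refine ⟨?_, hy0⟩
      have h1 : NCg L c < NCg L y := NCg_strictMonoOn L hL hc0.le (hc0.trans hy).le hy
      have h2 : 0 < y ^ k * Real.exp (-y / 2) := by positivity
      have : 0 < h y := by
        rw [hh]; dsimp only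
        have : 0 < (NCg L y - NCg L c) * (y - c) := by nlinarith
        positivity
      exact ne_of_gt this
    calc (0:ℝ≥0∞) < volume (Ioi c) := by simp
    _ ≤ _ := measure_mono hsub
  rw [hval] at hpos
  linarith

noncomputable def ncA (L k : ℕ) : ℝ := ncI L k / (2 ^ (k + 1) * (Nat.factorial k))

lemma ncA_pos (L k : ℕ) : 0 < ncA L k := by
  apply div_pos (ncI_pos L k)
  positivity

lemma ncA_le_one (L k : ℕ) : ncA L k ≤ 1 := by
  rw [ncA, div_le_one (by positivity)]
  exact ncI_le L k

lemma ncA_lt_succ (L : ℕ) (hL : 2 ≤ L) (k : ℕ) : ncA L k < ncA L (k + 1) := by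
  rw [ncA, ncA]
  have key := ncI_succ L hL k
  have hd : ((2:ℝ) ^ (k + 1 + 1) * (Nat.factorial (k+1)))
      = (2 * ((k:ℝ) + 1)) * (2 ^ (k + 1) * (Nat.factorial k)) := by
    rw [Nat.factorial_succ]; push_cast; ring
  rw [div_lt_div_iff₀ (by positivity) (by positivity), hd]
  have h1 : (0:ℝ) < 2 ^ (k + 1) * (Nat.factorial k) := by positivity
  calc ncI L k * (2 * ((k:ℝ) + 1) * (2 ^ (k + 1) * (Nat.factorial k)))
      = (2 * ((k:ℝ) + 1) * ncI L k) * (2 ^ (k + 1) * (Nat.factorial k)) := by ring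
    _ < ncI L (k+1) * (2 ^ (k + 1) * (Nat.factorial k)) := by
        exact mul_lt_mul_of_pos_right key h1


lemma NCg_def_eq (L : ℕ) (y : ℝ) : (1 - Real.exp (-y / 2)) ^ (L - 1) = NCg L y := rfl

lemma ncCoeff_eq (L k : ℕ) {lam : ℝ} (hlam : 0 < lam) :
    Real.exp (-lam/2) * lam ^ k / (2 * 4 ^ k * (Nat.factorial k : ℝ)^2) * ncI L k
      = ncA L k * (Real.exp (-lam / 2) * (lam / 2) ^ k / (Nat.factorial k)) := by
  have h4 : (4:ℝ) ^ k = 2 ^ k * 2 ^ k := by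
    rw [show (4:ℝ) = 2 * 2 by norm_num, mul_pow]
  have hfk : ((Nat.factorial k : ℝ)) ≠ 0 := Nat.cast_ne_zero.mpr (Nat.factorial_ne_zero k)
  rw [ncA, div_pow, h4]
  field_simp
  ring

lemma probBeatMax_eq_tsum (L : ℕ) {lam : ℝ} (hlam : 0 < lam) :
    probBeatMax L lam
      = ∑' k : ℕ, ncA L k * (Real.exp (-lam / 2) * (lam / 2) ^ k / (Nat.factorial k)) := by
  classical
  set C : ℕ → ℝ := fun k => Real.exp (-lam/2) * lam ^ k / (2 * 4 ^ k * (Nat.factorial k : ℝ)^2)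
    with hC
  have hCpos : ∀ k, 0 < C k := fun k => by rw [hC]; positivity
  set f : ℕ → ℝ → ℝ := fun k y => C k * (NCg L y * (y ^ k * Real.exp (-y / 2))) with hf
  have hpt : ∀ y ∈ Ioi (0:ℝ), (1 - Real.exp (-y / 2)) ^ (L - 1) * ncChiSq2Pdf lam y
      = ∑' k, f k y := by
    intro y hy
    have hy : (0:ℝ) < y := hy
    have hyl : 0 ≤ y * lam := by positivity
    have hb : besselI0 (Real.sqrt (y * lam))
        = ∑' k : ℕ, (y * lam) ^ k / (4 ^ k * (Nat.factorial k : ℝ)^2) := by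
      rw [besselI0]
      refine tsum_congr fun k => ?_
      have he : (Real.sqrt (y*lam) / 2) ^ (2*k) = (y*lam) ^ k / 4 ^ k := by
        rw [div_pow, pow_mul, pow_mul, Real.sq_sqrt hyl]
        norm_num
      rw [he, div_div]
    rw [NCg_def_eq, ncChiSq2Pdf, hb]
    rw [show NCg L y * (1 / 2 * Real.exp (-(y + lam) / 2)
        * ∑' k : ℕ, (y * lam) ^ k / (4 ^ k * (Nat.factorial k : ℝ)^2))
      = (NCg L y * (1 / 2 * Real.exp (-(y + lam) / 2)))
        * ∑' k : ℕ, (y * lam) ^ k / (4 ^ k * (Nat.factorial k : ℝ)^2) by ring]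
    rw [← tsum_mul_left]
    refine tsum_congr fun k => ?_
    rw [hf, hC]
    dsimp only
    rw [show -(y + lam) / 2 = -y/2 + -lam/2 by ring, Real.exp_add, mul_pow]
    have hfk : ((Nat.factorial k : ℝ)) ≠ 0 := Nat.cast_ne_zero.mpr (Nat.factorial_ne_zero k)
    field_simp
  have hmeas : ∀ k, AEStronglyMeasurable (f k) (volume.restrict (Ioi 0)) := fun k =>
    (continuous_const.mul ((NCg_continuous L).mul (by fun_prop))).aestronglyMeasurable
  have hint_k : ∀ k, IntegrableOn (f k) (Ioi 0) := fun k =>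
    (integrableOn_NCg_pow_exp L k).const_mul (C k)
  have hnn_k : ∀ k, 0 ≤ᵐ[volume.restrict (Ioi (0:ℝ))] f k := fun k => by
    refine (ae_restrict_iff' measurableSet_Ioi).2 (Filter.Eventually.of_forall fun y hy => ?_)
    have hy : (0:ℝ) < y := hy
    have h1 := NCg_nonneg L hy.le
    have h2 := (hCpos k).le
    simp only [Pi.zero_apply, hf]
    positivity
  have hlint_k : ∀ k, ∫⁻ y in Ioi (0:ℝ), ‖f k y‖₊ = ENNReal.ofReal (C k * ncI L k) := by
    intro k
    have e1 : ∫⁻ y in Ioi (0:ℝ), ‖f k y‖₊ = ∫⁻ y in Ioi (0:ℝ), ENNReal.ofReal (f k y) := by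
      refine lintegral_congr_ae ((hnn_k k).mono fun y hy => ?_)
      simp only [Pi.zero_apply] at hy
      simp only [← enorm_eq_nnnorm, ← ofReal_norm, Real.norm_of_nonneg hy]
    rw [e1, ← ofReal_integral_eq_lintegral_ofReal (hint_k k) (hnn_k k)]
    congr 1
    rw [hf]
    simp only
    rw [integral_const_mul]
    rfl
  have hbound : ∀ k, C k * ncI L k ≤ Real.exp (-lam / 2) * (lam / 2) ^ k / (Nat.factorial k) := by
    intro k
    have h1 : C k * ncI L k ≤ C k * (2 ^ (k + 1) * (Nat.factorial k)) :=
      mul_le_mul_of_nonneg_left (ncI_le L k) (hCpos k).le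
    refine h1.trans_eq ?_
    have h4 : (4:ℝ) ^ k = 2 ^ k * 2 ^ k := by
      rw [show (4:ℝ) = 2 * 2 by norm_num, mul_pow]
    have hfk : ((Nat.factorial k : ℝ)) ≠ 0 := Nat.cast_ne_zero.mpr (Nat.factorial_ne_zero k)
    rw [hC]
    dsimp only
    rw [div_pow, h4]
    field_simp
    ring
  have hsum : Summable (fun k : ℕ => Real.exp (-lam / 2) * (lam / 2) ^ k / (Nat.factorial k)) := by
    have := (Real.summable_pow_div_factorial (lam / 2)).mul_left (Real.exp (-lam / 2))
    refine this.congr fun k => ?_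
    rw [mul_div_assoc]
  have hlint : ∑' k, ∫⁻ y in Ioi (0:ℝ), ‖f k y‖₊ ≠ ∞ := by
    have hle : ∑' k, ∫⁻ y in Ioi (0:ℝ), ‖f k y‖₊
        ≤ ∑' k, ENNReal.ofReal (Real.exp (-lam / 2) * (lam / 2) ^ k / (Nat.factorial k)) := by
      refine ENNReal.tsum_le_tsum fun k => ?_
      rw [hlint_k k]
      exact ENNReal.ofReal_le_ofReal (hbound k)
    have heq : ∑' k, ENNReal.ofReal (Real.exp (-lam / 2) * (lam / 2) ^ k / (Nat.factorial k))
        = ENNReal.ofReal (∑' k, Real.exp (-lam / 2) * (lam / 2) ^ k / (Nat.factorial k)) := by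
      refine (ENNReal.ofReal_tsum_of_nonneg (fun k => ?_) hsum).symm
      positivity
    exact ne_top_of_le_ne_top (by rw [heq]; exact ENNReal.ofReal_ne_top) hle
  rw [probBeatMax, setIntegral_congr_fun measurableSet_Ioi hpt, integral_tsum hmeas hlint]
  refine tsum_congr fun k => ?_
  have hIval : (∫ y in Ioi (0:ℝ), f k y) = C k * ncI L k := by
    rw [hf]
    simp only
    rw [integral_const_mul]
    rfl
  rw [hIval]
  exact ncCoeff_eq L k hlam

noncomputable def ncH (L k : ℕ) (t : ℝ) : ℝ :=
  ncA L k * (Real.exp (-t / 2) * (t / 2) ^ k / (Nat.factorial k))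

noncomputable def ncDH (L k : ℕ) (t : ℝ) : ℝ :=
  ncA L k / (Nat.factorial k) * (Real.exp (-t / 2) * ((k : ℝ) * (t / 2) ^ (k - 1) - (t / 2) ^ k) / 2)

lemma probBeatMax_eq_tsum_ncH (L : ℕ) {lam : ℝ} (hlam : 0 < lam) :
    probBeatMax L lam = ∑' k : ℕ, ncH L k lam :=
  (probBeatMax_eq_tsum L hlam).trans (tsum_congr fun _ => rfl)

lemma hasDerivAt_ncH (L k : ℕ) (t : ℝ) : HasDerivAt (ncH L k) (ncDH L k t) t := by
  have h1 : HasDerivAt (fun t : ℝ => -t / 2) (-1 / 2) t := by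
    simpa using (hasDerivAt_id t).neg.div_const 2
  have h2 : HasDerivAt (fun t : ℝ => Real.exp (-t / 2)) (Real.exp (-t / 2) * (-1 / 2)) t :=
    h1.exp
  have h3 : HasDerivAt (fun t : ℝ => (t / 2) ^ k) ((k : ℝ) * (t / 2) ^ (k - 1) * (1 / 2)) t := by
    simpa [Function.comp_def] using (hasDerivAt_pow k (t / 2)).comp t ((hasDerivAt_id t).div_const 2)
  have h4 := ((h2.mul h3).div_const ((Nat.factorial k : ℝ))).const_mul (ncA L k)
  refine h4.congr_deriv ?_
  unfold ncDH
  ring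

lemma summable_aux (r : ℝ) :
    Summable (fun k : ℕ => (k : ℝ) * r ^ (k - 1) / (Nat.factorial k)) := by
  refine (summable_nat_add_iff 1).mp ?_
  refine (Real.summable_pow_div_factorial r).congr fun k => ?_
  rw [Nat.factorial_succ, Nat.add_sub_cancel]
  push_cast
  have hk : ((k : ℝ) + 1) ≠ 0 := by positivity
  field_simp

lemma ncDH_bound (L k : ℕ) {M t : ℝ} (ht : t ∈ Ioo 0 M) :
    ‖ncDH L k t‖ ≤ ((k : ℝ) * (M / 2) ^ (k - 1) + (M / 2) ^ k) / (Nat.factorial k) := by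
  obtain ⟨ht0, htM⟩ := ht
  have hA0 : (0:ℝ) ≤ ncA L k := (ncA_pos L k).le
  have hA1 := ncA_le_one L k
  have he : Real.exp (-t / 2) ≤ 1 := Real.exp_le_one_iff.mpr (by linarith)
  have hp1 : (t / 2) ^ (k - 1) ≤ (M / 2) ^ (k - 1) :=
    pow_le_pow_left₀ (by linarith) (by linarith) _
  have hp2 : (t / 2) ^ k ≤ (M / 2) ^ k := pow_le_pow_left₀ (by linarith) (by linarith) _
  have hq1 : (0:ℝ) ≤ (t / 2) ^ (k - 1) := by positivity
  have hq2 : (0:ℝ) ≤ (t / 2) ^ k := by positivity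
  have hK1 : (0:ℝ) ≤ (k : ℝ) * (M / 2) ^ (k - 1) :=
    mul_nonneg (Nat.cast_nonneg k) (hq1.trans hp1)
  have hK2 : (0:ℝ) ≤ (M / 2) ^ k := hq2.trans hp2
  have habs : |(k : ℝ) * (t / 2) ^ (k - 1) - (t / 2) ^ k|
      ≤ (k : ℝ) * (M / 2) ^ (k - 1) + (M / 2) ^ k := by
    have hm1 : (k : ℝ) * (t / 2) ^ (k - 1) ≤ (k : ℝ) * (M / 2) ^ (k - 1) :=
      mul_le_mul_of_nonneg_left hp1 (Nat.cast_nonneg k)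
    have hm0 : (0:ℝ) ≤ (k : ℝ) * (t / 2) ^ (k - 1) := mul_nonneg (Nat.cast_nonneg k) hq1
    rw [abs_le]
    constructor <;> linarith
  have hfk : (0:ℝ) < (Nat.factorial k : ℝ) := by exact_mod_cast Nat.factorial_pos k
  rw [ncDH, Real.norm_eq_abs, abs_mul, abs_div, abs_div, abs_mul,
    abs_of_nonneg hA0, abs_of_nonneg (Real.exp_pos _).le, abs_of_nonneg hfk.le, abs_two]
  calc ncA L k / (Nat.factorial k : ℝ)
        * (Real.exp (-t / 2) * |(k : ℝ) * (t / 2) ^ (k - 1) - (t / 2) ^ k| / 2)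
      ≤ 1 / (Nat.factorial k : ℝ)
        * (1 * ((k : ℝ) * (M / 2) ^ (k - 1) + (M / 2) ^ k) / 2) := by
        gcongr
    _ ≤ ((k : ℝ) * (M / 2) ^ (k - 1) + (M / 2) ^ k) / (Nat.factorial k : ℝ) := by
        rw [one_mul, one_div, inv_mul_eq_div, div_div]
        gcongr
        linarith

lemma summable_ncU (M : ℝ) :
    Summable (fun k : ℕ => ((k : ℝ) * (M / 2) ^ (k - 1) + (M / 2) ^ k) / (Nat.factorial k)) :=
  ((summable_aux (M / 2)).add (Real.summable_pow_div_factorial (M / 2))).congr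
    fun k => (add_div _ _ _).symm

lemma summable_ncH (L : ℕ) {t : ℝ} (ht : 0 ≤ t) : Summable (fun k : ℕ => ncH L k t) := by
  refine Summable.of_nonneg_of_le (fun k => ?_) (fun k => ?_)
    (Real.summable_pow_div_factorial (t / 2))
  · have := (ncA_pos L k).le
    rw [ncH]; positivity
  · rw [ncH]
    have h1 := ncA_le_one L k
    have h2 : Real.exp (-t / 2) ≤ 1 := Real.exp_le_one_iff.mpr (by linarith)
    have h3 : (0:ℝ) ≤ (t / 2) ^ k := by positivity
    have hfk : (0:ℝ) < (Nat.factorial k : ℝ) := by exact_mod_cast Nat.factorial_pos k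
    calc ncA L k * (Real.exp (-t / 2) * (t / 2) ^ k / (Nat.factorial k))
        ≤ 1 * (1 * (t / 2) ^ k / (Nat.factorial k)) := by gcongr
      _ = (t / 2) ^ k / (Nat.factorial k) := by ring

lemma tsum_ncDH_pos (L : ℕ) (hL : 2 ≤ L) {t : ℝ} (ht : 0 < t) :
    0 < ∑' k : ℕ, ncDH L k t := by
  have hμ0 : 0 < t / 2 := by linarith
  have hA1 : ∀ k, (0:ℝ) ≤ ncA L k := fun k => (ncA_pos L k).le
  have hA2 : ∀ k, ncA L k ≤ 1 := fun k => ncA_le_one L k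
  -- summability of the three auxiliary series
  have hsummP : Summable (fun k : ℕ => ncA L k * ((k : ℝ) * (t / 2) ^ (k - 1)) / (Nat.factorial k)) := by
    refine Summable.of_nonneg_of_le (fun k => ?_) (fun k => ?_) (summable_aux (t / 2))
    · have := hA1 k; positivity
    · have hfk : (0:ℝ) < (Nat.factorial k : ℝ) := by exact_mod_cast Nat.factorial_pos k
      have hnn : (0:ℝ) ≤ (k : ℝ) * (t / 2) ^ (k - 1) := by positivity
      calc ncA L k * ((k : ℝ) * (t / 2) ^ (k - 1)) / (Nat.factorial k)
          ≤ 1 * ((k : ℝ) * (t / 2) ^ (k - 1)) / (Nat.factorial k) := by gcongr; exact hA2 k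
        _ = (k : ℝ) * (t / 2) ^ (k - 1) / (Nat.factorial k) := by ring
  have hsummQ : Summable (fun k : ℕ => ncA L k * (t / 2) ^ k / (Nat.factorial k)) := by
    refine Summable.of_nonneg_of_le (fun k => ?_) (fun k => ?_)
      (Real.summable_pow_div_factorial (t / 2))
    · have := hA1 k; positivity
    · have hfk : (0:ℝ) < (Nat.factorial k : ℝ) := by exact_mod_cast Nat.factorial_pos k
      have hnn : (0:ℝ) ≤ (t / 2) ^ k := by positivity
      calc ncA L k * (t / 2) ^ k / (Nat.factorial k)
          ≤ 1 * (t / 2) ^ k / (Nat.factorial k) := by gcongr; exact hA2 k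
        _ = (t / 2) ^ k / (Nat.factorial k) := by ring
  have hsummR : Summable (fun k : ℕ => ncA L (k + 1) * (t / 2) ^ k / (Nat.factorial k)) := by
    refine Summable.of_nonneg_of_le (fun k => ?_) (fun k => ?_)
      (Real.summable_pow_div_factorial (t / 2))
    · have := hA1 (k + 1); positivity
    · have hfk : (0:ℝ) < (Nat.factorial k : ℝ) := by exact_mod_cast Nat.factorial_pos k
      have hnn : (0:ℝ) ≤ (t / 2) ^ k := by positivity
      calc ncA L (k + 1) * (t / 2) ^ k / (Nat.factorial k)
          ≤ 1 * (t / 2) ^ k / (Nat.factorial k) := by gcongr; exact hA2 (k + 1)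
        _ = (t / 2) ^ k / (Nat.factorial k) := by ring
  have hDH : ∀ k : ℕ, ncDH L k t = Real.exp (-t / 2) / 2
      * (ncA L k * ((k : ℝ) * (t / 2) ^ (k - 1)) / (Nat.factorial k)
        - ncA L k * (t / 2) ^ k / (Nat.factorial k)) := by
    intro k; rw [ncDH]; ring
  rw [tsum_congr hDH, tsum_mul_left, Summable.tsum_sub hsummP hsummQ]
  have hshift : ∑' k : ℕ, ncA L k * ((k : ℝ) * (t / 2) ^ (k - 1)) / (Nat.factorial k)
      = ∑' k : ℕ, ncA L (k + 1) * (t / 2) ^ k / (Nat.factorial k) := by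
    rw [Summable.tsum_eq_zero_add hsummP]
    simp only [Nat.cast_zero, zero_mul, mul_zero, zero_div, zero_add]
    refine tsum_congr fun k => ?_
    rw [Nat.factorial_succ, Nat.add_sub_cancel]
    have hfk : ((Nat.factorial k : ℝ)) ≠ 0 := Nat.cast_ne_zero.mpr (Nat.factorial_ne_zero k)
    have hk1 : ((k : ℝ) + 1) ≠ 0 := by positivity
    push_cast
    field_simp
  rw [hshift, ← Summable.tsum_sub hsummR hsummQ]
  have hpos : 0 < ∑' k : ℕ, (ncA L (k + 1) * (t / 2) ^ k / (Nat.factorial k)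
      - ncA L k * (t / 2) ^ k / (Nat.factorial k)) := by
    refine Summable.tsum_pos (hsummR.sub hsummQ) (fun k => ?_) 0 ?_
    · have h1 := (ncA_lt_succ L hL k).le
      have hnn : (0:ℝ) ≤ (t / 2) ^ k / (Nat.factorial k) := by positivity
      have e1 : ncA L (k + 1) * (t / 2) ^ k / (Nat.factorial k)
          - ncA L k * (t / 2) ^ k / (Nat.factorial k)
          = (ncA L (k + 1) - ncA L k) * ((t / 2) ^ k / (Nat.factorial k)) := by ring
      rw [e1]
      exact mul_nonneg (by linarith) hnn
    · have h1 := ncA_lt_succ L hL 0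
      simp only [pow_zero, Nat.factorial_zero, Nat.cast_one, mul_one, div_one]
      linarith
  positivity

theorem probBeatMax_strictMono_aux (L : ℕ) (hL : 2 ≤ L) :
    StrictMonoOn (probBeatMax L) (Set.Ioi (0 : ℝ)) := by
  intro x hx y hy hxy
  have hx : (0:ℝ) < x := hx
  have hy : (0:ℝ) < y := hy
  set M : ℝ := y + 1 with hM
  have hxM : x ∈ Ioo (0:ℝ) M := ⟨hx, by linarith⟩
  have hyM : y ∈ Ioo (0:ℝ) M := ⟨hy, by linarith⟩
  have hderiv : ∀ t ∈ Ioo (0:ℝ) M,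
      HasDerivAt (fun z => ∑' k : ℕ, ncH L k z) (∑' k : ℕ, ncDH L k t) t := by
    intro t ht
    exact hasDerivAt_tsum_of_isPreconnected (summable_ncU M) isOpen_Ioo
      (convex_Ioo (0:ℝ) M).isPreconnected
      (fun k z _ => hasDerivAt_ncH L k z)
      (fun k z hz => ncDH_bound L k hz)
      hxM (summable_ncH L hx.le) ht
  have hmono : StrictMonoOn (fun z => ∑' k : ℕ, ncH L k z) (Ioo (0:ℝ) M) := by
    refine strictMonoOn_of_deriv_pos (convex_Ioo _ _) ?_ ?_
    · intro t ht
      exact (hderiv t ht).continuousAt.continuousWithinAt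
    · intro t ht
      rw [interior_Ioo] at ht
      rw [(hderiv t ht).deriv]
      exact tsum_ncDH_pos L hL ht.1
  have e1 := probBeatMax_eq_tsum_ncH L hx
  have e2 := probBeatMax_eq_tsum_ncH L hy
  rw [e1, e2]
  exact hmono hxM hyM hxy

/-- The probability that a noncentral χ²₂(λ₁) variable exceeds the maximum of `L-1`
independent central χ²₂ variables is strictly increasing in the noncentrality `λ₁ > 0`. -/
theorem probBeatMax_strictMono (L : ℕ) (hL : 2 ≤ L) :
    StrictMonoOn (probBeatMax L) (Set.Ioi (0 : ℝ)) :=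
  probBeatMax_strictMono_aux L hL
end

section
/- Let Y₁ be noncentral chi-squared with 2 degrees of freedom and noncentrality λ₁ ≥ 0, and Y₂,...,Y_L i.i.d. central chi-squared with 2 DoF, independent of Y₁ and each other, L ≥ 2. Then P_a := P(Y₁ ≥ max{Y₂,...,Y_L}) = 1 - (L-1) Σ_{l=0}^{L-2} (-1)^l [C(L-2,l)/((l+1)(l+2))] exp(-λ₁(l+1)/(2(l+2))). -/
open MeasureTheory Real Finset
open scoped ENNReal NNReal

lemma besselI0_summable (x : ℝ) :
    Summable (fun k : ℕ => (x ^ 2 / 4) ^ k / ((Nat.factorial k : ℝ)) ^ 2) := by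
  refine Summable.of_nonneg_of_le (fun k => by positivity)
    (fun k => ?_) (Real.summable_pow_div_factorial (x ^ 2 / 4))
  have h1 : (0:ℝ) < (Nat.factorial k : ℝ) := by exact_mod_cast Nat.factorial_pos k
  have h2 : (Nat.factorial k : ℝ) ≤ ((Nat.factorial k : ℝ)) ^ 2 := by
    have h1' : (1:ℝ) ≤ (Nat.factorial k : ℝ) := by
      exact_mod_cast Nat.one_le_iff_ne_zero.mpr (Nat.factorial_ne_zero k)
    nlinarith [h1']
  exact div_le_div_of_nonneg_left (by positivity) h1 h2

lemma besselI0_eq (x : ℝ) :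
    besselI0 x = ∑' k : ℕ, (x ^ 2 / 4) ^ k / ((Nat.factorial k : ℝ)) ^ 2 := by
  unfold besselI0
  congr 1; funext k
  rw [pow_mul]
  ring_nf

lemma besselI0_hasSum (x : ℝ) :
    HasSum (fun k : ℕ => (x ^ 2 / 4) ^ k / ((Nat.factorial k : ℝ)) ^ 2) (besselI0 x) := by
  rw [besselI0_eq]
  exact (besselI0_summable x).hasSum

lemma besselI0_nonneg (x : ℝ) : 0 ≤ besselI0 x :=
  (besselI0_hasSum x).nonneg (fun k => by positivity)

lemma besselI0_measurable : Measurable besselI0 := by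
  apply measurable_of_tendsto_metrizable
    (f := fun n x => ∑ k ∈ Finset.range n, (x ^ 2 / 4) ^ k / ((Nat.factorial k : ℝ)) ^ 2)
  · intro n
    exact Finset.measurable_sum _ (fun k _ => by fun_prop)
  · rw [tendsto_pi_nhds]
    intro x
    exact (besselI0_hasSum x).tendsto_sum_nat

lemma pdf_hasSum (lam a : ℝ) (hlam : 0 ≤ lam) {y : ℝ} (hy : 0 ≤ y) :
    HasSum (fun k : ℕ =>
        (1 / 2 * Real.exp (-lam / 2) * (lam / 4) ^ k / ((Nat.factorial k : ℝ)) ^ 2)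
          * (y ^ k * Real.exp (-((a + 1 / 2) * y))))
      (Real.exp (-(a * y)) * ncChiSq2Pdf lam y) := by
  have h0 : Real.sqrt (y * lam) ^ 2 = y * lam := Real.sq_sqrt (mul_nonneg hy hlam)
  have h1 : HasSum (fun k : ℕ => (y * lam / 4) ^ k / ((Nat.factorial k : ℝ)) ^ 2)
      (besselI0 (Real.sqrt (y * lam))) := by
    have := besselI0_hasSum (Real.sqrt (y * lam))
    rwa [h0] at this
  have h2 := h1.mul_left (Real.exp (-(a * y)) * ((1 / 2) * Real.exp (-(y + lam) / 2)))
  have he : Real.exp (-(a * y)) * Real.exp (-(y + lam) / 2)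
      = Real.exp (-lam / 2) * Real.exp (-((a + 1 / 2) * y)) := by
    rw [← Real.exp_add, ← Real.exp_add]; ring_nf
  have hval : Real.exp (-(a * y)) * ncChiSq2Pdf lam y
      = Real.exp (-(a * y)) * (1 / 2 * Real.exp (-(y + lam) / 2)) * besselI0 (Real.sqrt (y * lam)) := by
    rw [ncChiSq2Pdf]; ring
  have hfun : (fun k : ℕ =>
        (1 / 2 * Real.exp (-lam / 2) * (lam / 4) ^ k / ((Nat.factorial k : ℝ)) ^ 2)
          * (y ^ k * Real.exp (-((a + 1 / 2) * y))))
      = fun k : ℕ => Real.exp (-(a * y)) * (1 / 2 * Real.exp (-(y + lam) / 2))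
          * ((y * lam / 4) ^ k / ((Nat.factorial k : ℝ)) ^ 2) := by
    funext k
    rw [show y * lam / 4 = y * (lam / 4) by ring, mul_pow]
    linear_combination (-(1 / 2) * (lam / 4) ^ k * y ^ k / ((Nat.factorial k : ℝ)) ^ 2) * he
  rw [hval, hfun]
  exact h2

lemma integrable_pow_exp (k : ℕ) {c : ℝ} (hc : 0 < c) :
    IntegrableOn (fun y : ℝ => y ^ k * Real.exp (-(c * y))) (Set.Ioi 0) := by
  have hk : (-1 : ℝ) < (k : ℝ) := lt_of_lt_of_le (by norm_num) (Nat.cast_nonneg k)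
  have := integrableOn_rpow_mul_exp_neg_mul_rpow (p := 1) (s := (k : ℝ)) (b := c)
    hk one_pos hc
  refine this.congr_fun (fun x hx => ?_) measurableSet_Ioi
  rw [Set.mem_Ioi] at hx
  beta_reduce
  rw [Real.rpow_one, Real.rpow_natCast, neg_mul]

lemma int_pow_exp (k : ℕ) {c : ℝ} (hc : 0 < c) :
    ∫ y in Set.Ioi (0 : ℝ), y ^ k * Real.exp (-(c * y))
      = (Nat.factorial k : ℝ) / c ^ (k + 1) := by
  have h := Real.integral_rpow_mul_exp_neg_mul_Ioi (a := (k : ℝ) + 1) (r := c)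
    (by positivity) hc
  have heq : ∫ y in Set.Ioi (0 : ℝ), y ^ k * Real.exp (-(c * y))
      = ∫ t in Set.Ioi (0 : ℝ), t ^ ((k : ℝ) + 1 - 1) * Real.exp (-(c * t)) := by
    refine setIntegral_congr_fun measurableSet_Ioi (fun t ht => ?_)
    rw [Set.mem_Ioi] at ht
    rw [add_sub_cancel_right, Real.rpow_natCast]
  rw [heq, h, Real.Gamma_nat_eq_factorial,
    show (k : ℝ) + 1 = ((k + 1 : ℕ) : ℝ) by push_cast; ring, Real.rpow_natCast,
    div_pow, one_pow]
  ring

lemma exp_tsum (x : ℝ) : ∑' k : ℕ, x ^ k / (Nat.factorial k : ℝ) = Real.exp x := by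
  rw [Real.exp_eq_exp_ℝ, NormedSpace.exp_eq_tsum_div]

lemma ncChiSq2Pdf_nonneg (lam y : ℝ) : 0 ≤ ncChiSq2Pdf lam y := by
  unfold ncChiSq2Pdf
  have := besselI0_nonneg (Real.sqrt (y * lam))
  positivity

lemma ncChiSq2Pdf_measurable (lam : ℝ) : Measurable (ncChiSq2Pdf lam) := by
  unfold ncChiSq2Pdf
  exact (measurable_const.mul ((measurable_id.add measurable_const).neg.div_const
    2).exp).mul (besselI0_measurable.comp (Real.continuous_sqrt.measurable.comp
      (measurable_id.mul_const lam)))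

lemma sum_aux {c : ℝ} (hc : 0 < c) (lam : ℝ) (k : ℕ) :
    1 / 2 * Real.exp (-lam / 2) * (lam / 4) ^ k / ((Nat.factorial k : ℝ)) ^ 2
      * ((Nat.factorial k : ℝ) / c ^ (k + 1))
    = 1 / (2 * c) * Real.exp (-lam / 2) * ((lam / (4 * c)) ^ k / (Nat.factorial k : ℝ)) := by
  have hF : (0:ℝ) < (Nat.factorial k : ℝ) := by exact_mod_cast Nat.factorial_pos k
  have hp : (lam / (4 * c)) ^ k = (lam / 4) ^ k / c ^ k := by
    rw [div_pow, div_pow, div_div, ← mul_pow]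
  rw [hp, pow_succ]
  have hck : (0:ℝ) < c ^ k := pow_pos hc k
  field_simp
  ring

lemma exp_aux {a : ℝ} (ha : 0 ≤ a) (lam : ℝ) :
    1 / (2 * (a + 1 / 2)) * Real.exp (-lam / 2) * Real.exp (lam / (4 * (a + 1 / 2)))
      = 1 / (1 + 2 * a) * Real.exp (-(lam * a / (1 + 2 * a))) := by
  have h1 : (1 + 2 * a) ≠ 0 := by linarith
  have h2 : (a + 1 / 2) ≠ 0 := by linarith
  have harg : -lam / 2 + lam / (4 * (a + 1 / 2)) = -(lam * a / (1 + 2 * a)) := by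
    field_simp
    ring
  rw [mul_assoc, ← Real.exp_add, harg, show 2 * (a + 1 / 2) = 1 + 2 * a from by ring]

lemma laplace (lam : ℝ) (hlam : 0 ≤ lam) (a : ℝ) (ha : 0 ≤ a) :
    IntegrableOn (fun y : ℝ => Real.exp (-(a * y)) * ncChiSq2Pdf lam y) (Set.Ioi 0) ∧
    ∫ y in Set.Ioi (0 : ℝ), Real.exp (-(a * y)) * ncChiSq2Pdf lam y
      = 1 / (1 + 2 * a) * Real.exp (-(lam * a / (1 + 2 * a))) := by
  set c : ℝ := a + 1 / 2 with hc_def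
  have hc : 0 < c := by simp [hc_def]; linarith
  set f : ℕ → ℝ → ℝ := fun k y =>
    (1 / 2 * Real.exp (-lam / 2) * (lam / 4) ^ k / ((Nat.factorial k : ℝ)) ^ 2)
      * (y ^ k * Real.exp (-(c * y))) with hf_def
  set I : ℕ → ℝ := fun k =>
    (1 / (2 * c) * Real.exp (-lam / 2)) * ((lam / (4 * c)) ^ k / (Nat.factorial k : ℝ))
    with hI_def
  have hInn : ∀ k, 0 ≤ I k := fun k => by
    have h4 : (0:ℝ) ≤ lam / (4 * c) := by positivity
    have := pow_nonneg h4 k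
    positivity
  have hfnn : ∀ k, ∀ y : ℝ, 0 ≤ y → 0 ≤ f k y := fun k y hy => by
    have h4 : (0:ℝ) ≤ lam / 4 := by positivity
    have := pow_nonneg h4 k
    have := pow_nonneg hy k
    positivity
  have hint : ∀ k, IntegrableOn (f k) (Set.Ioi 0) := fun k =>
    (integrable_pow_exp k hc).const_mul _
  have hval : ∀ k, ∫ y in Set.Ioi (0:ℝ), f k y = I k := by
    intro k
    rw [hf_def]
    simp only
    rw [integral_const_mul, int_pow_exp k hc, hI_def]
    exact sum_aux hc lam k
  have hS : Summable I := by
    rw [hI_def]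
    exact (Real.summable_pow_div_factorial (lam / (4 * c))).mul_left _
  have hmeas : ∀ k, AEStronglyMeasurable (f k) (volume.restrict (Set.Ioi (0:ℝ))) := by
    intro k
    exact (((measurable_id.pow_const k).mul
      ((measurable_id.const_mul c).neg.exp)).const_mul _).aestronglyMeasurable
  have hnnae : ∀ k, 0 ≤ᵐ[volume.restrict (Set.Ioi (0:ℝ))] f k := by
    intro k
    filter_upwards [ae_restrict_mem measurableSet_Ioi] with y hy
    exact hfnn k y (le_of_lt hy)
  have hlin' : ∀ k, ∫⁻ y in Set.Ioi (0:ℝ), ENNReal.ofReal (f k y) = ENNReal.ofReal (I k) := by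
    intro k
    rw [← ofReal_integral_eq_lintegral_ofReal (hint k) (hnnae k), hval k]
  have hlin : ∀ k, ∫⁻ y in Set.Ioi (0:ℝ), (‖f k y‖₊ : ℝ≥0∞) = ENNReal.ofReal (I k) := by
    intro k
    rw [← hlin' k]
    refine lintegral_congr_ae ?_
    filter_upwards [hnnae k] with y hy
    exact Real.enorm_eq_ofReal hy
  have hfin : (∑' k, ∫⁻ y in Set.Ioi (0:ℝ), (‖f k y‖₊ : ℝ≥0∞)) ≠ ⊤ := by
    simp_rw [hlin]
    rw [← ENNReal.ofReal_tsum_of_nonneg hInn hS]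
    exact ENNReal.ofReal_ne_top
  have htsumval : ∑' k, I k = 1 / (1 + 2 * a) * Real.exp (-(lam * a / (1 + 2 * a))) := by
    rw [hI_def]
    rw [tsum_mul_left, exp_tsum, hc_def]
    exact exp_aux ha lam
  have hgeq : ∀ y ∈ Set.Ioi (0:ℝ),
      Real.exp (-(a * y)) * ncChiSq2Pdf lam y = ∑' k, f k y := fun y hy =>
    ((pdf_hasSum lam a hlam (le_of_lt hy)).tsum_eq).symm
  constructor
  · refine ⟨((measurable_id.const_mul a).neg.exp.mul
      (ncChiSq2Pdf_measurable lam)).aestronglyMeasurable, ?_⟩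
    rw [hasFiniteIntegral_iff_norm]
    have hae : ∀ᵐ y ∂(volume.restrict (Set.Ioi (0:ℝ))),
        ENNReal.ofReal ‖Real.exp (-(a * y)) * ncChiSq2Pdf lam y‖
          = ∑' k, ENNReal.ofReal (f k y) := by
      filter_upwards [ae_restrict_mem measurableSet_Ioi] with y hy
      have hg0 : 0 ≤ Real.exp (-(a * y)) * ncChiSq2Pdf lam y :=
        mul_nonneg (Real.exp_nonneg _) (ncChiSq2Pdf_nonneg lam y)
      rw [Real.norm_of_nonneg hg0, hgeq y hy,
        ENNReal.ofReal_tsum_of_nonneg (fun k => hfnn k y (le_of_lt hy))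
          (pdf_hasSum lam a hlam (le_of_lt hy)).summable]
    rw [lintegral_congr_ae hae, lintegral_tsum (fun k =>
      ((hmeas k).aemeasurable.ennreal_ofReal))]
    simp_rw [hlin']
    rw [← ENNReal.ofReal_tsum_of_nonneg hInn hS]
    exact ENNReal.ofReal_lt_top
  · rw [setIntegral_congr_fun measurableSet_Ioi hgeq,
      integral_tsum hmeas hfin]
    simp_rw [hval]
    exact htsumval

/-- `P_a = P(Y₁ ≥ max{Y₂,…,Y_L})` where `Y₁ ~ χ²₂(λ₁)` and `Y₂,…,Y_L` are i.i.d.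
central χ²₂, all independent; by conditioning on `Y₁` this equals
`∫₀^∞ (1 - e^{-y/2})^{L-1} f_{χ²₂(λ₁)}(y) dy`. -/
noncomputable def Pa (L : ℕ) (lam : ℝ) : ℝ :=
  ∫ y in Set.Ioi (0 : ℝ), (1 - Real.exp (-y / 2)) ^ (L - 1) * ncChiSq2Pdf lam y

/-- Closed form of the successful beam alignment probability:
`P_a = 1 - (L-1) ∑_{l=0}^{L-2} (-1)^l [C(L-2,l)/((l+1)(l+2))] exp(-λ₁(l+1)/(2(l+2)))`. -/
theorem Pa_closed_form (L : ℕ) (hL : 2 ≤ L) (lam1 : ℝ) (hlam : 0 ≤ lam1) :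
    Pa L lam1
      = 1 - (L - 1 : ℝ) *
          ∑ l ∈ Finset.range (L - 1),
            (-1 : ℝ) ^ l * ((Nat.choose (L - 2) l : ℝ) / (((l : ℝ) + 1) * ((l : ℝ) + 2)))
              * Real.exp (-lam1 * ((l : ℝ) + 1) / (2 * ((l : ℝ) + 2))) := by
  obtain ⟨m, rfl⟩ : ∃ m, L = m + 2 := ⟨L - 2, by omega⟩
  have hL1 : m + 2 - 1 = m + 1 := rfl
  have hL2 : m + 2 - 2 = m := rfl
  have hexpand : ∀ y : ℝ, (1 - Real.exp (-y / 2)) ^ (m + 1) * ncChiSq2Pdf lam1 y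
      = ∑ k ∈ Finset.range (m + 2), ((-1 : ℝ) ^ k * (Nat.choose (m + 1) k : ℝ))
          * (Real.exp (-((k : ℝ) / 2 * y)) * ncChiSq2Pdf lam1 y) := by
    intro y
    rw [sub_eq_neg_add, add_pow, Finset.sum_mul]
    refine Finset.sum_congr rfl fun k hk => ?_
    have he : Real.exp (-y / 2) ^ k = Real.exp (-((k : ℝ) / 2 * y)) := by
      rw [← Real.exp_nat_mul]; congr 1; ring
    rw [neg_pow, one_pow, he]
    ring
  have hintk : ∀ k : ℕ, IntegrableOn (fun y : ℝ =>
      ((-1 : ℝ) ^ k * (Nat.choose (m + 1) k : ℝ))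
        * (Real.exp (-((k : ℝ) / 2 * y)) * ncChiSq2Pdf lam1 y)) (Set.Ioi 0) := fun k =>
    ((laplace lam1 hlam ((k : ℝ) / 2) (by positivity)).1.const_mul _)
  have hI : ∀ k : ℕ, ∫ y in Set.Ioi (0 : ℝ),
      Real.exp (-((k : ℝ) / 2 * y)) * ncChiSq2Pdf lam1 y
        = 1 / (1 + 2 * ((k : ℝ) / 2))
            * Real.exp (-(lam1 * ((k : ℝ) / 2) / (1 + 2 * ((k : ℝ) / 2)))) := fun k =>
    (laplace lam1 hlam ((k : ℝ) / 2) (by positivity)).2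
  have hPa : Pa (m + 2) lam1 = ∑ k ∈ Finset.range (m + 2),
      ((-1 : ℝ) ^ k * (Nat.choose (m + 1) k : ℝ))
        * (1 / (1 + 2 * ((k : ℝ) / 2))
            * Real.exp (-(lam1 * ((k : ℝ) / 2) / (1 + 2 * ((k : ℝ) / 2))))) := by
    unfold Pa
    rw [hL1]
    rw [setIntegral_congr_fun measurableSet_Ioi (fun y _ => hexpand y),
      integral_finset_sum _ (fun k _ => hintk k)]
    exact Finset.sum_congr rfl fun k _ => by rw [integral_const_mul, hI k]
  rw [hPa]
  simp only [show m + 2 - 2 = m from by omega, show m + 2 - 1 = m + 1 from by omega]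
  rw [Finset.sum_range_succ']
  have h0 : ((-1 : ℝ) ^ 0 * (Nat.choose (m + 1) 0 : ℝ))
      * (1 / (1 + 2 * (((0 : ℕ) : ℝ) / 2))
          * Real.exp (-(lam1 * (((0 : ℕ) : ℝ) / 2) / (1 + 2 * (((0 : ℕ) : ℝ) / 2))))) = 1 := by
    norm_num
  rw [h0]
  have hterm : ∀ l ∈ Finset.range (m + 1),
      ((-1 : ℝ) ^ (l + 1) * (Nat.choose (m + 1) (l + 1) : ℝ))
        * (1 / (1 + 2 * (((l + 1 : ℕ) : ℝ) / 2))
            * Real.exp (-(lam1 * (((l + 1 : ℕ) : ℝ) / 2) / (1 + 2 * (((l + 1 : ℕ) : ℝ) / 2)))))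
      = -((((m : ℝ)) + 1) * ((-1 : ℝ) ^ l
          * ((Nat.choose m l : ℝ) / (((l : ℝ) + 1) * ((l : ℝ) + 2)))
          * Real.exp (-lam1 * ((l : ℝ) + 1) / (2 * ((l : ℝ) + 2))))) := by
    intro l _
    have hl1 : ((l : ℝ) + 1) ≠ 0 := by positivity
    have hl2 : ((l : ℝ) + 2) ≠ 0 := by positivity
    have hcast : ((l + 1 : ℕ) : ℝ) = (l : ℝ) + 1 := by push_cast; ring
    rw [hcast]
    have hden : 1 + 2 * (((l : ℝ) + 1) / 2) = (l : ℝ) + 2 := by ring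
    rw [hden]
    have harg : -(lam1 * (((l : ℝ) + 1) / 2) / ((l : ℝ) + 2))
        = -lam1 * ((l : ℝ) + 1) / (2 * ((l : ℝ) + 2)) := by
      field_simp
    rw [harg]
    have hcc : ((m : ℝ) + 1) * (Nat.choose m l : ℝ)
        = (Nat.choose (m + 1) (l + 1) : ℝ) * ((l : ℝ) + 1) := by
      exact_mod_cast Nat.add_one_mul_choose_eq m l
    rw [pow_succ]
    generalize Real.exp (-lam1 * ((l : ℝ) + 1) / (2 * ((l : ℝ) + 2))) = E
    have hC : (Nat.choose (m + 1) (l + 1) : ℝ) = ((m : ℝ) + 1) * (Nat.choose m l : ℝ) / ((l : ℝ) + 1) := by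
      rw [eq_div_iff hl1]; linear_combination hcc.symm
    rw [hC]
    field_simp
  rw [Finset.sum_congr rfl hterm]
  have hcL : ((m + 2 : ℕ) : ℝ) - 1 = (m : ℝ) + 1 := by push_cast; ring
  rw [hcL, Finset.sum_neg_distrib, ← Finset.mul_sum]
  ring
end
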